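/- For ε ∈ [0,1) and unit vectors n, r ∈ ℝ³, the map w(r) = ((1-ε²)r + 2ε(1 + ε(n·r))n)/(1 + ε² + 2ε(n·r)) is a bijection of S² with inverse w⁻¹(r) = ((1-ε²)r - 2ε(1 - ε(n·r))n)/(1 + ε² - 2ε(n·r)). -/

import Mathlib

open Matrix

noncomputable section

/-- Pauli matrix σ₁. -/
def pauli1 : Matrix (Fin 2) (Fin 2) ℂ := !![0, 1; 1, 0]
/-- Pauli matrix σ₂. -/
def pauli2 : Matrix (Fin 2) (Fin 2) ℂ := !![0, -Complex.I; Complex.I, 0]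
/-- Pauli matrix σ₃. -/
def pauli3 : Matrix (Fin 2) (Fin 2) ℂ := !![1, 0; 0, -1]

/-- σ(v) = v₁σ₁ + v₂σ₂ + v₃σ₃ for v ∈ ℝ³. -/
def pauliVec (v : Fin 3 → ℝ) : Matrix (Fin 2) (Fin 2) ℂ :=
  (v 0 : ℂ) • pauli1 + (v 1 : ℂ) • pauli2 + (v 2 : ℂ) • pauli3

/-- Euclidean dot product on ℝ³. -/
def dot3 (a b : Fin 3 → ℝ) : ℝ := a 0 * b 0 + a 1 * b 1 + a 2 * b 2

/-- v is a unit vector of ℝ³. -/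
def IsUnitVec (v : Fin 3 → ℝ) : Prop := dot3 v v = 1

/-- P(n,ε) = (I + ε σ(n))/2. -/
def Pmat (n : Fin 3 → ℝ) (ε : ℝ) : Matrix (Fin 2) (Fin 2) ℂ :=
  ((1 : ℂ)/2) • (1 + (ε : ℂ) • pauliVec n)

/-- λ(ε,n,r) = (1 + ε² + 2ε(n·r))/4. -/
def lam (ε : ℝ) (n r : Fin 3 → ℝ) : ℝ := (1 + ε^2 + 2*ε*(dot3 n r))/4

/-- The map w(r) = ((1-ε²)r + 2ε(1+ε(n·r))n)/(1+ε²+2ε(n·r)). -/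
def wmap (ε : ℝ) (n r : Fin 3 → ℝ) : Fin 3 → ℝ :=
  fun i => ((1 - ε^2) * r i + 2*ε*(1 + ε*(dot3 n r)) * n i) / (1 + ε^2 + 2*ε*(dot3 n r))

/-- The inverse map w⁻¹. -/
def winv (ε : ℝ) (n r : Fin 3 → ℝ) : Fin 3 → ℝ :=
  fun i => ((1 - ε^2) * r i - 2*ε*(1 - ε*(dot3 n r)) * n i) / (1 + ε^2 - 2*ε*(dot3 n r))

section Helpers

lemma dot3_bounds {n r : Fin 3 → ℝ} (hn : IsUnitVec n) (hr : IsUnitVec r) :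
    -1 ≤ dot3 n r ∧ dot3 n r ≤ 1 := by
  simp only [IsUnitVec, dot3] at *
  constructor
  · nlinarith [sq_nonneg (n 0 + r 0), sq_nonneg (n 1 + r 1), sq_nonneg (n 2 + r 2)]
  · nlinarith [sq_nonneg (n 0 - r 0), sq_nonneg (n 1 - r 1), sq_nonneg (n 2 - r 2)]

lemma winv_eq_wmap_neg (ε : ℝ) (n r : Fin 3 → ℝ) : winv ε n r = wmap (-ε) n r := by
  funext i; simp only [winv, wmap]; ring_nf

lemma wmap_eq_winv_neg (ε : ℝ) (n r : Fin 3 → ℝ) : wmap ε n r = winv (-ε) n r := by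
  funext i; simp only [winv, wmap]; ring_nf

lemma wmap_unit {ε : ℝ} {n r : Fin 3 → ℝ} (hn : IsUnitVec n) (hr : IsUnitVec r)
    (hD : 1 + ε^2 + 2*ε*(dot3 n r) ≠ 0) : IsUnitVec (wmap ε n r) := by
  simp only [IsUnitVec, dot3, wmap] at *
  have hD2 : 1 + ε ^ 2 + ε * 2 * (r 0 * n 0 + n 1 * r 1 + n 2 * r 2) ≠ 0 := by convert hD using 1; ring
  field_simp
  linear_combination ((1-ε^2)^2) * hr + (2*ε*(1+ε*(n 0*r 0+n 1*r 1+n 2*r 2)))^2 * hn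

lemma winv_wmap {ε : ℝ} {n r : Fin 3 → ℝ} (hn : IsUnitVec n)
    (hD : 1 + ε^2 + 2*ε*(dot3 n r) ≠ 0) (hε2 : (1:ℝ) - ε^2 ≠ 0) :
    winv ε n (wmap ε n r) = r := by
  have hs' : dot3 n (wmap ε n r)
      = ((1-ε^2)*(dot3 n r) + 2*ε*(1+ε*(dot3 n r))) / (1 + ε^2 + 2*ε*(dot3 n r)) := by
    simp only [IsUnitVec, dot3, wmap] at *
    have hD2 : 1 + ε ^ 2 + ε * 2 * (n 0 * r 0 + n 1 * r 1 + n 2 * r 2) ≠ 0 := by convert hD using 1; ring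
    field_simp
    linear_combination (2*ε*(1+ε*(n 0*r 0+n 1*r 1+n 2*r 2))) * hn
  funext i
  simp only [winv, hs', wmap]
  have hD2 : 1 + ε ^ 2 + ε * 2 * dot3 n r ≠ 0 := by convert hD using 1; ring
  have h1 : (1:ℝ) + ε^2 - 2*ε*(((1-ε^2)*(dot3 n r) + 2*ε*(1+ε*(dot3 n r))) / (1 + ε^2 + 2*ε*(dot3 n r)))
      = (1-ε^2)^2 / (1 + ε^2 + 2*ε*(dot3 n r)) := by
    field_simp; ring
  rw [h1]
  have h2 : (1-ε^2)^2 / (1 + ε^2 + 2*ε*(dot3 n r)) ≠ 0 := by positivity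
  field_simp
  ring

lemma Dpos {ε : ℝ} {n r : Fin 3 → ℝ} (hn : IsUnitVec n) (hr : IsUnitVec r)
    (h0 : 0 ≤ ε) (h1 : ε < 1) : 0 < 1 + ε^2 + 2*ε*(dot3 n r) := by
  obtain ⟨hl, _⟩ := dot3_bounds hn hr
  nlinarith

lemma D'pos {ε : ℝ} {n r : Fin 3 → ℝ} (hn : IsUnitVec n) (hr : IsUnitVec r)
    (h0 : 0 ≤ ε) (h1 : ε < 1) : 0 < 1 + ε^2 - 2*ε*(dot3 n r) := by
  obtain ⟨_, hu⟩ := dot3_bounds hn hr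
  nlinarith

end Helpers

/-- w is a bijection of S² with inverse w⁻¹. -/
theorem stmt6 (n : Fin 3 → ℝ) (hn : IsUnitVec n) (ε : ℝ) (hε : ε ∈ Set.Ico (0:ℝ) 1) :
    Set.BijOn (wmap ε n) {v | IsUnitVec v} {v | IsUnitVec v} ∧
    (∀ r : Fin 3 → ℝ, IsUnitVec r →
      winv ε n (wmap ε n r) = r ∧ wmap ε n (winv ε n r) = r) := by
  obtain ⟨h0, h1⟩ := hε
  have hε2 : (1:ℝ) - ε^2 ≠ 0 := by nlinarith
  have hε2' : (1:ℝ) - (-ε)^2 ≠ 0 := by nlinarith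
  -- key facts
  have hwu : ∀ r : Fin 3 → ℝ, IsUnitVec r → IsUnitVec (wmap ε n r) :=
    fun r hr => wmap_unit hn hr (ne_of_gt (Dpos hn hr h0 h1))
  have hvu : ∀ r : Fin 3 → ℝ, IsUnitVec r → IsUnitVec (winv ε n r) := by
    intro r hr
    rw [winv_eq_wmap_neg]
    refine wmap_unit hn hr ?_
    have := D'pos hn hr h0 h1
    intro h; apply ne_of_gt this; nlinarith [h]
  have hleft : ∀ r : Fin 3 → ℝ, IsUnitVec r → winv ε n (wmap ε n r) = r :=
    fun r hr => winv_wmap hn (ne_of_gt (Dpos hn hr h0 h1)) hε2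
  have hright : ∀ r : Fin 3 → ℝ, IsUnitVec r → wmap ε n (winv ε n r) = r := by
    intro r hr
    rw [winv_eq_wmap_neg, wmap_eq_winv_neg]
    refine winv_wmap hn ?_ hε2'
    have := D'pos hn hr h0 h1
    intro h; apply ne_of_gt this; nlinarith [h]
  refine ⟨⟨fun r hr => hwu r hr, ?_, ?_⟩, fun r hr => ⟨hleft r hr, hright r hr⟩⟩
  · intro x hx y hy h
    have := congrArg (winv ε n) h
    rwa [hleft x hx, hleft y hy] at this
  · intro v hv
    exact ⟨winv ε n v, hvu v hv, hright v hv⟩
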